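/- All higher-order partial derivatives of the power flow injections are determined by the injection values, the voltage magnitudes, and the first-order angle derivatives. Precisely: let (G, B) and (G', B') be two pairs of N×N real matrices with associated injection functions (P, Q) and (P', Q'), and let (δ, V) and (δ', V) be two points sharing the same magnitude vector V with V_i ≠ 0 for all i. If for all i, j one has P_i(δ,V) = P'_i(δ',V), Q_i(δ,V) = Q'_i(δ',V), ∂P_i/∂δ_j (δ,V) = ∂P'_i/∂δ_j (δ',V), and ∂Q_i/∂δ_j (δ,V) = ∂Q'_i/∂δ_j (δ',V), then for every i, every k ≥ 1, and every choice of k variables among δ_1,…,δ_N, V_1,…,V_N, the corresponding k-th order iterated partial derivative of P_i (respectively Q_i) at (δ, V) equals that of P'_i (respectively Q'_i) at (δ', V). -/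

import Mathlib

/-- Active power injection `P_i(δ, V)`. -/
noncomputable def Pinj (N : ℕ) (G B : Fin N → Fin N → ℝ) (i : Fin N) :
    (Fin N → ℝ) × (Fin N → ℝ) → ℝ :=
  fun x => x.2 i * ∑ j, x.2 j *
    (G i j * Real.cos (x.1 i - x.1 j) + B i j * Real.sin (x.1 i - x.1 j))

/-- Reactive power injection `Q_i(δ, V)`. -/
noncomputable def Qinj (N : ℕ) (G B : Fin N → Fin N → ℝ) (i : Fin N) :
    (Fin N → ℝ) × (Fin N → ℝ) → ℝ :=
  fun x => x.2 i * ∑ j, x.2 j *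
    (G i j * Real.sin (x.1 i - x.1 j) - B i j * Real.cos (x.1 i - x.1 j))

/-- Partial derivative with respect to the angle `δ_j`. -/
noncomputable def pdA (N : ℕ) (j : Fin N) (f : (Fin N → ℝ) × (Fin N → ℝ) → ℝ) :
    (Fin N → ℝ) × (Fin N → ℝ) → ℝ :=
  fun x => fderiv ℝ f x (Pi.single j 1, 0)

/-- Partial derivative with respect to the voltage magnitude `V_j`. -/
noncomputable def pdM (N : ℕ) (j : Fin N) (f : (Fin N → ℝ) × (Fin N → ℝ) → ℝ) :
    (Fin N → ℝ) × (Fin N → ℝ) → ℝ :=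
  fun x => fderiv ℝ f x (0, Pi.single j 1)

/-- The coordinate direction in `(δ, V)`-space corresponding to a variable: `Sum.inl j`
is the angle variable `δ_j` and `Sum.inr j` is the magnitude variable `V_j`. -/
noncomputable def dirVec (N : ℕ) : Fin N ⊕ Fin N → (Fin N → ℝ) × (Fin N → ℝ)
  | Sum.inl j => (Pi.single j 1, 0)
  | Sum.inr j => (0, Pi.single j 1)

/-- Iterated partial derivative with respect to the list of variables `l` (each a
choice among `δ_1, …, δ_N, V_1, …, V_N`). -/
noncomputable def iterPD (N : ℕ) (l : List (Fin N ⊕ Fin N))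
    (f : (Fin N → ℝ) × (Fin N → ℝ) → ℝ) : (Fin N → ℝ) × (Fin N → ℝ) → ℝ :=
  l.foldr (fun v g => fun x => fderiv ℝ g x (dirVec N v)) f

noncomputable def Erot (r : ℕ) (g b θ : ℝ) : ℝ :=
  g * Real.cos (θ + r * (Real.pi / 2)) + b * Real.sin (θ + r * (Real.pi / 2))

lemma Erot_succ (r : ℕ) (g b θ : ℝ) :
    Erot (r+1) g b θ
      = -(g * Real.sin (θ + r * (Real.pi/2))) + b * Real.cos (θ + r*(Real.pi/2)) := by
  unfold Erot
  rw [Nat.cast_add, Nat.cast_one,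
    show θ + ((r:ℝ)+1)*(Real.pi/2) = (θ + r*(Real.pi/2)) + Real.pi/2 by ring,
    Real.cos_add_pi_div_two, Real.sin_add_pi_div_two]
  ring

lemma hasDerivAt_Erot (r : ℕ) (g b θ : ℝ) :
    HasDerivAt (fun θ => Erot r g b θ) (Erot (r+1) g b θ) θ := by
  have h1 : HasDerivAt (fun θ : ℝ => θ + r * (Real.pi/2)) 1 θ := (hasDerivAt_id θ).add_const _
  have hc : HasDerivAt (fun θ : ℝ => Real.cos (θ + r*(Real.pi/2)))
      (-Real.sin (θ + r*(Real.pi/2)) * 1) θ :=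
    by have := (Real.hasDerivAt_cos (θ + r*(Real.pi/2))).comp θ h1; exact this
  have hs : HasDerivAt (fun θ : ℝ => Real.sin (θ + r*(Real.pi/2)))
      (Real.cos (θ + r*(Real.pi/2)) * 1) θ :=
    by have := (Real.hasDerivAt_sin (θ + r*(Real.pi/2))).comp θ h1; exact this
  have := (hc.const_mul g).add (hs.const_mul b)
  rw [Erot_succ]
  refine this.congr_deriv ?_
  ring

lemma Erot_add_two (r : ℕ) (g b θ : ℝ) : Erot (r+2) g b θ = -Erot r g b θ := by
  rw [show r + 2 = (r+1)+1 by ring, Erot_succ, Erot,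
    Nat.cast_add, Nat.cast_one,
    show θ + ((r:ℝ)+1)*(Real.pi/2) = (θ + r*(Real.pi/2)) + Real.pi/2 by ring,
    Real.cos_add_pi_div_two, Real.sin_add_pi_div_two]
  ring

lemma Erot_zero (g b θ : ℝ) : Erot 0 g b θ = g * Real.cos θ + b * Real.sin θ := by
  simp [Erot]

lemma Erot_three (g b θ : ℝ) : Erot 3 g b θ = g * Real.sin θ - b * Real.cos θ := by
  unfold Erot
  rw [show θ + ((3:ℕ):ℝ)*(Real.pi/2) = (θ + Real.pi/2) + Real.pi by push_cast; ring,
    Real.cos_add_pi, Real.sin_add_pi, Real.cos_add_pi_div_two, Real.sin_add_pi_div_two]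
  ring

lemma Erot_all {g b g' b' θ θ' : ℝ} (h0 : Erot 0 g b θ = Erot 0 g' b' θ')
    (h3 : Erot 3 g b θ = Erot 3 g' b' θ') (r : ℕ) :
    Erot r g b θ = Erot r g' b' θ' := by
  have h1 : Erot 1 g b θ = Erot 1 g' b' θ' := by
    have e : ∀ (g b θ : ℝ), Erot 3 g b θ = -Erot 1 g b θ := fun g b θ => Erot_add_two 1 g b θ
    have := h3; rw [e, e] at this; linarith
  have key : ∀ r, Erot r g b θ = Erot r g' b' θ' ∧ Erot (r+1) g b θ = Erot (r+1) g' b' θ' := by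
    intro r
    induction r with
    | zero => exact ⟨h0, h1⟩
    | succ n ih =>
      refine ⟨ih.2, ?_⟩
      rw [show n + 1 + 1 = n + 2 by ring, Erot_add_two, Erot_add_two, ih.1]
  exact (key r).1

structure Term (N : ℕ) where
  c : ℝ
  i : Fin N
  j : Fin N
  m : ℕ
  n : ℕ
  r : ℕ

noncomputable def Term.eval {N : ℕ} (G B : Fin N → Fin N → ℝ) (t : Term N)
    (x : (Fin N → ℝ) × (Fin N → ℝ)) : ℝ :=
  t.c * ((x.2 t.i)^t.m * ((x.2 t.j)^t.n *
    Erot t.r (G t.i t.j) (B t.i t.j) (x.1 t.i - x.1 t.j)))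

noncomputable def pdTerm {N : ℕ} (v : Fin N ⊕ Fin N) (t : Term N) : List (Term N) :=
  match v with
  | Sum.inl k => [{ t with
      c := t.c * ((if t.i = k then (1:ℝ) else 0) - (if t.j = k then 1 else 0)),
      r := t.r + 1 }]
  | Sum.inr k => [{ t with c := t.c * (if t.i = k then (t.m:ℝ) else 0), m := t.m - 1 },
                  { t with c := t.c * (if t.j = k then (t.n:ℝ) else 0), n := t.n - 1 }]

noncomputable def evalL {N : ℕ} (G B : Fin N → Fin N → ℝ) (ts : List (Term N))
    (x : (Fin N → ℝ) × (Fin N → ℝ)) : ℝ :=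
  (ts.map (fun t => t.eval G B x)).sum

noncomputable def Aδ (N : ℕ) (i : Fin N) : ((Fin N → ℝ) × (Fin N → ℝ)) →L[ℝ] ℝ :=
  (ContinuousLinearMap.proj i).comp (ContinuousLinearMap.fst ℝ (Fin N → ℝ) (Fin N → ℝ))

noncomputable def AV (N : ℕ) (i : Fin N) : ((Fin N → ℝ) × (Fin N → ℝ)) →L[ℝ] ℝ :=
  (ContinuousLinearMap.proj i).comp (ContinuousLinearMap.snd ℝ (Fin N → ℝ) (Fin N → ℝ))

lemma term_hasFDerivAt {N : ℕ} (G B : Fin N → Fin N → ℝ) (t : Term N)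
    (x : (Fin N → ℝ) × (Fin N → ℝ)) :
    ∃ L : ((Fin N → ℝ) × (Fin N → ℝ)) →L[ℝ] ℝ, HasFDerivAt (Term.eval G B t) L x ∧
      ∀ v, L (dirVec N v) = evalL G B (pdTerm v t) x := by
  have hVi : HasFDerivAt (fun x : (Fin N → ℝ) × (Fin N → ℝ) => x.2 t.i) (AV N t.i) x :=
    (AV N t.i).hasFDerivAt
  have hVj : HasFDerivAt (fun x : (Fin N → ℝ) × (Fin N → ℝ) => x.2 t.j) (AV N t.j) x :=
    (AV N t.j).hasFDerivAt
  have hpi : HasFDerivAt (fun x : (Fin N → ℝ) × (Fin N → ℝ) => (x.2 t.i)^t.m)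
      (((t.m : ℝ) * (x.2 t.i)^(t.m - 1)) • AV N t.i) x :=
    (hasDerivAt_pow t.m (x.2 t.i)).comp_hasFDerivAt x hVi
  have hpj : HasFDerivAt (fun x : (Fin N → ℝ) × (Fin N → ℝ) => (x.2 t.j)^t.n)
      (((t.n : ℝ) * (x.2 t.j)^(t.n - 1)) • AV N t.j) x :=
    (hasDerivAt_pow t.n (x.2 t.j)).comp_hasFDerivAt x hVj
  have hθ : HasFDerivAt (fun x : (Fin N → ℝ) × (Fin N → ℝ) => x.1 t.i - x.1 t.j)
      (Aδ N t.i - Aδ N t.j) x :=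
    (Aδ N t.i).hasFDerivAt.sub (Aδ N t.j).hasFDerivAt
  have htrig : HasFDerivAt
      (fun x : (Fin N → ℝ) × (Fin N → ℝ) => Erot t.r (G t.i t.j) (B t.i t.j) (x.1 t.i - x.1 t.j))
      ((Erot (t.r+1) (G t.i t.j) (B t.i t.j) (x.1 t.i - x.1 t.j)) • (Aδ N t.i - Aδ N t.j)) x :=
    by have := (hasDerivAt_Erot t.r (G t.i t.j) (B t.i t.j) (x.1 t.i - x.1 t.j)).comp_hasFDerivAt x hθ; exact this
  have h2 := hpj.mul htrig
  have h1 := hpi.mul h2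
  have h0 := h1.const_mul t.c
  refine ⟨_, h0, ?_⟩
  intro v
  cases v with
  | inl k =>
    by_cases hik : t.i = k <;> by_cases hjk : t.j = k <;>
      simp [dirVec, evalL, pdTerm, Term.eval, Aδ, AV, Pi.single_apply, hik, hjk] <;> ring
  | inr k =>
    by_cases hik : t.i = k <;> by_cases hjk : t.j = k <;>
      simp [dirVec, evalL, pdTerm, Term.eval, Aδ, AV, Pi.single_apply, hik, hjk] <;> ring

lemma evalL_cons {N : ℕ} (G B : Fin N → Fin N → ℝ) (t : Term N) (ts : List (Term N)) (x) :
    evalL G B (t :: ts) x = t.eval G B x + evalL G B ts x := rfl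

lemma evalL_append {N : ℕ} (G B : Fin N → Fin N → ℝ) (ts₁ ts₂ : List (Term N)) (x) :
    evalL G B (ts₁ ++ ts₂) x = evalL G B ts₁ x + evalL G B ts₂ x := by
  simp [evalL]

lemma evalL_differentiableAt {N : ℕ} (G B : Fin N → Fin N → ℝ) (ts : List (Term N)) (x) :
    DifferentiableAt ℝ (evalL G B ts) x := by
  induction ts with
  | nil =>
    rw [show evalL G B ([] : List (Term N))
        = (fun _ : (Fin N → ℝ) × (Fin N → ℝ) => (0:ℝ)) from rfl]
    exact differentiableAt_const 0
  | cons t ts ih =>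
    obtain ⟨L, hL, -⟩ := term_hasFDerivAt G B t x
    rw [show evalL G B (t :: ts)
        = (fun y => Term.eval G B t y + evalL G B ts y) from rfl]
    exact hL.differentiableAt.add ih

lemma evalL_fderiv_dir {N : ℕ} (G B : Fin N → Fin N → ℝ) (ts : List (Term N)) (v) (x) :
    fderiv ℝ (evalL G B ts) x (dirVec N v) = evalL G B (ts.flatMap (pdTerm v)) x := by
  induction ts with
  | nil =>
    have h : evalL G B ([] : List (Term N))
        = fun _ : (Fin N → ℝ) × (Fin N → ℝ) => (0:ℝ) := rfl
    rw [h]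
    simp [evalL]
  | cons t ts ih =>
    obtain ⟨L, hL, hLv⟩ := term_hasFDerivAt G B t x
    have heq : evalL G B (t :: ts) = fun y => Term.eval G B t y + evalL G B ts y := rfl
    rw [heq, fderiv_fun_add hL.differentiableAt (evalL_differentiableAt G B ts x),
      List.flatMap_cons, evalL_append]
    rw [ContinuousLinearMap.add_apply, hL.fderiv, hLv v, ih]

noncomputable def derivs {N : ℕ} (l : List (Fin N ⊕ Fin N)) (ts : List (Term N)) :
    List (Term N) :=
  l.foldr (fun v ts' => ts'.flatMap (pdTerm v)) ts

lemma iterPD_evalL {N : ℕ} (G B : Fin N → Fin N → ℝ) (l : List (Fin N ⊕ Fin N))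
    (ts : List (Term N)) (x) :
    iterPD N l (evalL G B ts) x = evalL G B (derivs l ts) x := by
  induction l generalizing x with
  | nil => rfl
  | cons v l ih =>
    have h1 : iterPD N (v :: l) (evalL G B ts)
        = fun x => fderiv ℝ (iterPD N l (evalL G B ts)) x (dirVec N v) := rfl
    have h2 : iterPD N l (evalL G B ts) = evalL G B (derivs l ts) := funext (fun y => ih y)
    rw [h1, h2]
    exact evalL_fderiv_dir G B (derivs l ts) v x

noncomputable def PTerms (N : ℕ) (i : Fin N) : List (Term N) :=
  (List.finRange N).map (fun j => ⟨1, i, j, 1, 1, 0⟩)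

noncomputable def QTerms (N : ℕ) (i : Fin N) : List (Term N) :=
  (List.finRange N).map (fun j => ⟨1, i, j, 1, 1, 3⟩)

lemma evalL_map_finRange {N : ℕ} (G B : Fin N → Fin N → ℝ) (f : Fin N → Term N) (x) :
    evalL G B ((List.finRange N).map f) x = ∑ j, (f j).eval G B x := by
  rw [Fin.sum_univ_def]
  simp [evalL, List.map_map, Function.comp]
  rfl

lemma Pinj_eq {N : ℕ} (G B : Fin N → Fin N → ℝ) (i : Fin N) :
    Pinj N G B i = evalL G B (PTerms N i) := by
  funext x
  rw [PTerms, evalL_map_finRange]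
  unfold Pinj
  rw [Finset.mul_sum]
  refine Finset.sum_congr rfl fun j _ => ?_
  simp [Term.eval, Erot_zero]

lemma Qinj_eq {N : ℕ} (G B : Fin N → Fin N → ℝ) (i : Fin N) :
    Qinj N G B i = evalL G B (QTerms N i) := by
  funext x
  rw [QTerms, evalL_map_finRange]
  unfold Qinj
  rw [Finset.mul_sum]
  refine Finset.sum_congr rfl fun j _ => ?_
  simp [Term.eval, Erot_three]

lemma evalL_congr {N : ℕ} {G B G' B' : Fin N → Fin N → ℝ} {δ δ' V : Fin N → ℝ}
    (hkey : ∀ i j (r : ℕ),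
      Erot r (G i j) (B i j) (δ i - δ j) = Erot r (G' i j) (B' i j) (δ' i - δ' j))
    (ts : List (Term N)) :
    evalL G B ts (δ, V) = evalL G' B' ts (δ', V) := by
  induction ts with
  | nil => rfl
  | cons t ts ih =>
    rw [evalL_cons, evalL_cons, ih]
    congr 1
    simp only [Term.eval]
    rw [hkey t.i t.j t.r]

lemma evalL_flatMap {N : ℕ} (G B : Fin N → Fin N → ℝ) (ts : List (Term N))
    (F : Term N → List (Term N)) (x) :
    evalL G B (ts.flatMap F) x = (ts.map (fun t => evalL G B (F t) x)).sum := by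
  induction ts with
  | nil => rfl
  | cons t ts ih => rw [List.flatMap_cons, evalL_append, ih]; rfl

lemma evalL_flatMap_finRange {N : ℕ} (G B : Fin N → Fin N → ℝ) (f : Fin N → Term N)
    (F : Term N → List (Term N)) (x) :
    evalL G B (((List.finRange N).map f).flatMap F) x = ∑ j', evalL G B (F (f j')) x := by
  rw [evalL_flatMap, List.map_map, Fin.sum_univ_def]
  rfl

lemma pdA_Pinj {N : ℕ} (G B : Fin N → Fin N → ℝ) (i j : Fin N)
    (x : (Fin N → ℝ) × (Fin N → ℝ)) :
    pdA N j (Pinj N G B i) x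
      = ∑ j', ((if i = j then (1:ℝ) else 0) - if j' = j then 1 else 0) *
          (x.2 i * (x.2 j' * Erot 1 (G i j') (B i j') (x.1 i - x.1 j'))) := by
  have h0 : pdA N j (Pinj N G B i) x = fderiv ℝ (Pinj N G B i) x (dirVec N (Sum.inl j)) := rfl
  rw [h0, Pinj_eq, evalL_fderiv_dir, PTerms, evalL_flatMap_finRange]
  refine Finset.sum_congr rfl fun j' _ => ?_
  simp [pdTerm, evalL, Term.eval]

lemma pdA_Qinj {N : ℕ} (G B : Fin N → Fin N → ℝ) (i j : Fin N)
    (x : (Fin N → ℝ) × (Fin N → ℝ)) :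
    pdA N j (Qinj N G B i) x
      = ∑ j', ((if i = j then (1:ℝ) else 0) - if j' = j then 1 else 0) *
          (x.2 i * (x.2 j' * Erot 4 (G i j') (B i j') (x.1 i - x.1 j'))) := by
  have h0 : pdA N j (Qinj N G B i) x = fderiv ℝ (Qinj N G B i) x (dirVec N (Sum.inl j)) := rfl
  rw [h0, Qinj_eq, evalL_fderiv_dir, QTerms, evalL_flatMap_finRange]
  refine Finset.sum_congr rfl fun j' _ => ?_
  simp [pdTerm, evalL, Term.eval]

lemma sumCollapse12 {N : ℕ} (F : Fin N → ℝ) (j : Fin N) :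
    (∑ j', ((0:ℝ) - if j' = j then 1 else 0) * F j') = -F j := by
  rw [Finset.sum_congr rfl (fun j' _ =>
    show ((0:ℝ) - if j' = j then 1 else 0) * F j' = (if j' = j then -F j' else 0) by
      by_cases h : j' = j <;> simp [h])]
  simp [Finset.sum_ite_eq']

/-- All higher-order partial derivatives of the power flow injections are determined by
the injection values, the voltage magnitudes, and the first-order angle derivatives:
if two parameter pairs and angle profiles (with the same nonvanishing magnitude profile)
produce the same injections and the same first-order angle derivatives, then all their
iterated partial derivatives of every order `k ≥ 1` coincide. -/
theorem stmt12 (N : ℕ) (hN : 1 ≤ N) (G B G' B' : Fin N → Fin N → ℝ)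
    (δ δ' V : Fin N → ℝ) (hV : ∀ i, V i ≠ 0)
    (hP : ∀ i, Pinj N G B i (δ, V) = Pinj N G' B' i (δ', V))
    (hQ : ∀ i, Qinj N G B i (δ, V) = Qinj N G' B' i (δ', V))
    (hPd : ∀ i j, pdA N j (Pinj N G B i) (δ, V) = pdA N j (Pinj N G' B' i) (δ', V))
    (hQd : ∀ i j, pdA N j (Qinj N G B i) (δ, V) = pdA N j (Qinj N G' B' i) (δ', V)) :
    ∀ (i : Fin N) (l : List (Fin N ⊕ Fin N)), 1 ≤ l.length →
      iterPD N l (Pinj N G B i) (δ, V) = iterPD N l (Pinj N G' B' i) (δ', V) ∧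
      iterPD N l (Qinj N G B i) (δ, V) = iterPD N l (Qinj N G' B' i) (δ', V) := by
  -- off-diagonal first-order equalities
  have E1off : ∀ i j, j ≠ i →
      Erot 1 (G i j) (B i j) (δ i - δ j) = Erot 1 (G' i j) (B' i j) (δ' i - δ' j) := by
    intro i j hji
    have hij : ¬ (i = j) := fun e => hji e.symm
    have h := hPd i j
    rw [pdA_Pinj G B i j, pdA_Pinj G' B' i j] at h
    simp only [if_neg hij] at h
    rw [sumCollapse12, sumCollapse12] at h
    have h2 := neg_injective h
    exact mul_left_cancel₀ (hV j) (mul_left_cancel₀ (hV i) h2)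
  have E4off : ∀ i j, j ≠ i →
      Erot 4 (G i j) (B i j) (δ i - δ j) = Erot 4 (G' i j) (B' i j) (δ' i - δ' j) := by
    intro i j hji
    have hij : ¬ (i = j) := fun e => hji e.symm
    have h := hQd i j
    rw [pdA_Qinj G B i j, pdA_Qinj G' B' i j] at h
    simp only [if_neg hij] at h
    rw [sumCollapse12, sumCollapse12] at h
    have h2 := neg_injective h
    exact mul_left_cancel₀ (hV j) (mul_left_cancel₀ (hV i) h2)
  have E3off : ∀ i j, j ≠ i →
      Erot 3 (G i j) (B i j) (δ i - δ j) = Erot 3 (G' i j) (B' i j) (δ' i - δ' j) := by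
    intro i j hji
    have h1 := E1off i j hji
    rw [show (3:ℕ) = 1+2 from rfl, Erot_add_two, Erot_add_two, h1]
  have E0off : ∀ i j, j ≠ i →
      Erot 0 (G i j) (B i j) (δ i - δ j) = Erot 0 (G' i j) (B' i j) (δ' i - δ' j) := by
    intro i j hji
    have h4 := E4off i j hji
    rw [show (4:ℕ) = 2+2 from rfl, Erot_add_two, Erot_add_two,
      show (2:ℕ) = 0+2 from rfl, Erot_add_two, Erot_add_two] at h4
    simpa using h4
  -- diagonal equalities
  have hPsum : ∀ i, (∑ j, V j * Erot 0 (G i j) (B i j) (δ i - δ j))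
      = ∑ j, V j * Erot 0 (G' i j) (B' i j) (δ' i - δ' j) := by
    intro i
    have h := hP i
    simp only [Pinj, ← Erot_zero] at h
    exact mul_left_cancel₀ (hV i) h
  have hQsum : ∀ i, (∑ j, V j * Erot 3 (G i j) (B i j) (δ i - δ j))
      = ∑ j, V j * Erot 3 (G' i j) (B' i j) (δ' i - δ' j) := by
    intro i
    have h := hQ i
    simp only [Qinj, ← Erot_three] at h
    exact mul_left_cancel₀ (hV i) h
  have hGdiag : ∀ i, G i i = G' i i := by
    intro i
    have h := hPsum i
    rw [← Finset.sum_erase_add _ _ (Finset.mem_univ i),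
      ← Finset.sum_erase_add _ _ (Finset.mem_univ i)] at h
    rw [Finset.sum_congr rfl (fun j hj => by
      rw [E0off i j (Finset.ne_of_mem_erase hj)])] at h
    have h2 := add_left_cancel h
    have h3 := mul_left_cancel₀ (hV i) h2
    rw [sub_self, sub_self, Erot_zero, Erot_zero] at h3
    simpa using h3
  have hBdiag : ∀ i, B i i = B' i i := by
    intro i
    have h := hQsum i
    rw [← Finset.sum_erase_add _ _ (Finset.mem_univ i),
      ← Finset.sum_erase_add _ _ (Finset.mem_univ i)] at h
    rw [Finset.sum_congr rfl (fun j hj => by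
      rw [E3off i j (Finset.ne_of_mem_erase hj)])] at h
    have h2 := add_left_cancel h
    have h3 := mul_left_cancel₀ (hV i) h2
    rw [sub_self, sub_self, Erot_three, Erot_three] at h3
    simpa using h3
  -- master key
  have key : ∀ i j (r : ℕ),
      Erot r (G i j) (B i j) (δ i - δ j) = Erot r (G' i j) (B' i j) (δ' i - δ' j) := by
    intro i j r
    by_cases h : j = i
    · subst h
      rw [sub_self, sub_self, hGdiag j, hBdiag j]
    · exact Erot_all (E0off i j h) (E3off i j h) r
  intro i l _
  constructor
  · rw [Pinj_eq G B i, Pinj_eq G' B' i, iterPD_evalL, iterPD_evalL]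
    exact evalL_congr key _
  · rw [Qinj_eq G B i, Qinj_eq G' B' i, iterPD_evalL, iterPD_evalL]
    exact evalL_congr key _
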